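/- Fix nonnegative integers m, n and an integer k with 0 ≤ k ≤ m. The generating function, by total weight |α|+|β|, over pairs (α,β) where α is a strictly decreasing sequence of integers in [1,m], β is a strictly decreasing sequence of integers in [0,n] (i.e., β may end with a part 0), and length(α) − length(β) = k, equals q^{binom(k+1,2)} · [m+n+1 choose n+k+1]_q as a formal power series (in fact polynomial) in q. -/

import Mathlib

open Finset

/-- The q-shifted factorial `(q;q)_r = ∏_{i=1}^r (1 - q^i)` in `ℚ(q)`. -/
noncomputable def qPoch (r : ℕ) : RatFunc ℚ :=
  ∏ i ∈ Finset.range r, (1 - (RatFunc.X : RatFunc ℚ) ^ (i + 1))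

/-- The Gaussian binomial coefficient `[a choose b]_q`, zero outside `0 ≤ b ≤ a`. -/
noncomputable def qbinom (a : ℕ) (b : ℤ) : RatFunc ℚ :=
  if 0 ≤ b ∧ b ≤ (a : ℤ) then qPoch a / (qPoch b.toNat * qPoch (a - b.toNat)) else 0

lemma one_sub_X_pow_ne_zero (i : ℕ) : (1 - (RatFunc.X : RatFunc ℚ) ^ (i+1)) ≠ 0 := by
  have : ((1 : Polynomial ℚ) - Polynomial.X ^ (i+1)) ≠ 0 := by
    intro h
    have := congrArg (Polynomial.eval 2) h
    simp at this
    have h2 : (2:ℚ)^(i+1) ≥ 2 := by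
      calc (2:ℚ)^(i+1) ≥ 2^1 := by
            apply pow_le_pow_right₀ (by norm_num) (by omega)
        _ = 2 := by norm_num
    linarith
  intro h
  apply this
  apply RatFunc.algebraMap_injective ℚ
  rw [map_zero, map_sub, map_one, map_pow, RatFunc.algebraMap_X]
  exact h

lemma qPoch_ne_zero (r : ℕ) : qPoch r ≠ 0 := by
  unfold qPoch
  exact Finset.prod_ne_zero_iff.2 fun i _ => one_sub_X_pow_ne_zero i

lemma qPoch_succ (r : ℕ) : qPoch (r+1) = qPoch r * (1 - (RatFunc.X : RatFunc ℚ) ^ (r+1)) := by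
  unfold qPoch; rw [Finset.prod_range_succ]

lemma qPoch_zero : qPoch 0 = 1 := by simp [qPoch]

lemma qbinom_self (a : ℕ) : qbinom a (a:ℤ) = 1 := by
  unfold qbinom
  rw [if_pos ⟨Int.natCast_nonneg a, le_refl _⟩]
  simp [Int.toNat_natCast, qPoch_zero, div_self (qPoch_ne_zero a)]

lemma qbinom_zero' (a : ℕ) : qbinom a 0 = 1 := by
  unfold qbinom
  rw [if_pos ⟨le_refl _, Int.natCast_nonneg a⟩]
  simp [qPoch_zero, div_self (qPoch_ne_zero a)]

lemma qbinom_of_gt {a : ℕ} {b : ℤ} (h : (a:ℤ) < b) : qbinom a b = 0 := by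
  unfold qbinom
  rw [if_neg]; omega

lemma qbinom_pascal (N K : ℕ) (h : K ≤ N) :
    qbinom (N+1) ((K:ℤ)+1) =
      qbinom N ((K:ℤ)+1) + (RatFunc.X : RatFunc ℚ)^(N-K) * qbinom N (K:ℤ) := by
  rcases eq_or_lt_of_le h with rfl | hlt
  · have h1 : qbinom K ((K:ℤ)+1) = 0 := qbinom_of_gt (by omega)
    have h2 : qbinom (K+1) ((K:ℤ)+1) = 1 := by
      rw [show ((K:ℤ)+1) = ((K+1:ℕ):ℤ) by push_cast; ring]; exact qbinom_self (K+1)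
    rw [h1, h2, qbinom_self, Nat.sub_self, pow_zero]; ring
  · obtain ⟨d, rfl⟩ : ∃ d, N = K + 1 + d := ⟨N - K - 1, by omega⟩
    unfold qbinom
    rw [if_pos (by constructor <;> omega), if_pos (by constructor <;> omega),
      if_pos (by constructor <;> omega)]
    have ht : ((K:ℤ)+1).toNat = K+1 := by omega
    have htK : ((K:ℤ)).toNat = K := by omega
    rw [ht, htK]
    have e1 : K + 1 + d + 1 - (K+1) = d + 1 := by omega
    have e2 : K + 1 + d - (K+1) = d := by omega
    have e3 : K + 1 + d - K = d + 1 := by omega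
    rw [e1, e2, e3]
    rw [show K+1+d+1 = (K+1+d)+1 from rfl, qPoch_succ (K+1+d), qPoch_succ K, qPoch_succ d]
    have hX : (RatFunc.X : RatFunc ℚ)^(K+1+d+1) = RatFunc.X^(d+1) * RatFunc.X^(K+1) := by
      rw [← pow_add]; ring_nf
    field_simp [qPoch_ne_zero, one_sub_X_pow_ne_zero]
    ring_nf

lemma gf_powersetCard (N : ℕ) : ∀ K : ℕ,
    ∑ S ∈ (Finset.range N).powersetCard K, (RatFunc.X : RatFunc ℚ)^(S.sum id) =
      (RatFunc.X : RatFunc ℚ)^(K*(K-1)/2) * qbinom N (K:ℤ) := by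
  induction N with
  | zero =>
    intro K
    cases K with
    | zero => simp [qbinom_zero']
    | succ K =>
      rw [Finset.powersetCard_eq_empty.2 (by simp), Finset.sum_empty,
        qbinom_of_gt (by push_cast; omega), mul_zero]
  | succ N ih =>
    intro K
    cases K with
    | zero => simp [qbinom_zero']
    | succ K =>
      rw [Finset.range_add_one, Finset.powersetCard_succ_insert (Finset.notMem_range_self) K,
        Finset.sum_union, Finset.sum_image]
      · have hins : ∀ S ∈ (Finset.range N).powersetCard K,
            (insert N S).sum id = N + S.sum id := by
          intro S hS
          rw [Finset.mem_powersetCard] at hS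
          rw [Finset.sum_insert (fun hN => Finset.notMem_range_self (hS.1 hN))]
          rfl
        have hins2 : ∑ x ∈ (Finset.range N).powersetCard K,
            (RatFunc.X : RatFunc ℚ)^((insert N x).sum id)
            = ∑ x ∈ (Finset.range N).powersetCard K, (RatFunc.X : RatFunc ℚ)^(N + x.sum id) :=
          Finset.sum_congr rfl fun S hS => by rw [hins S hS]
        rw [hins2, ih (K+1)]
        have : ∑ S ∈ (Finset.range N).powersetCard K, (RatFunc.X : RatFunc ℚ)^(N + S.sum id)
            = RatFunc.X^N * ∑ S ∈ (Finset.range N).powersetCard K, (RatFunc.X : RatFunc ℚ)^(S.sum id) := by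
          rw [Finset.mul_sum]
          exact Finset.sum_congr rfl fun S _ => by rw [pow_add]
        rw [this, ih K]
        by_cases hKN : K ≤ N
        · have hcast : ((K+1:ℕ):ℤ) = (K:ℤ)+1 := by push_cast; ring
          rw [hcast, qbinom_pascal N K hKN]
          have h2 : (K+1)*K = K*(K-1) + 2*K := by
            cases K with
            | zero => simp
            | succ t => simp only [Nat.succ_sub_one]; ring
          have hexp2 : N + K*(K-1)/2 = (K+1)*(K+1-1)/2 + (N - K) := by
            simp only [Nat.add_sub_cancel]
            omega
          rw [mul_add]
          congr 1
          rw [← mul_assoc, ← mul_assoc, ← pow_add, ← pow_add, hexp2]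
        · rw [qbinom_of_gt (by push_cast; omega), qbinom_of_gt (by push_cast; omega),
            qbinom_of_gt (by push_cast; omega)]
          ring
      · intro S hS T hT hST
        rw [Finset.mem_coe, Finset.mem_powersetCard] at hS hT
        have hNS : N ∉ S := fun h => Finset.notMem_range_self (hS.1 h)
        have hNT : N ∉ T := fun h => Finset.notMem_range_self (hT.1 h)
        rw [← Finset.erase_insert hNS, ← Finset.erase_insert hNT, hST]
      · rw [Finset.disjoint_left]
        intro S hS hS'
        rw [Finset.mem_powersetCard] at hS
        rw [Finset.mem_image] at hS'
        obtain ⟨T, hT, rfl⟩ := hS'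
        exact Finset.notMem_range_self (hS.1 (Finset.mem_insert_self N T))


lemma mem_fmap (n : ℕ) (A B : Finset ℕ) (hA : ∀ a ∈ A, 1 ≤ a) (hB : ∀ b ∈ B, b ≤ n) (x : ℕ) :
    x ∈ A.image (· + n) ∪ (Finset.Icc 0 n \ B.image (fun b => n - b)) ↔
      (n < x ∧ x - n ∈ A) ∨ (x ≤ n ∧ n - x ∉ B) := by
  simp only [mem_union, mem_image, mem_sdiff, mem_Icc]
  constructor
  · rintro (⟨a, ha, rfl⟩ | ⟨⟨-, hx⟩, hne⟩)
    · refine Or.inl ⟨by have := hA a ha; omega, ?_⟩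
      rwa [Nat.add_sub_cancel]
    · right; exact ⟨hx, fun hmem => hne ⟨n - x, hmem, by omega⟩⟩
  · rintro (⟨hx, ha⟩ | ⟨hx, hb⟩)
    · exact Or.inl ⟨x - n, ha, by omega⟩
    · right
      refine ⟨⟨Nat.zero_le x, hx⟩, ?_⟩
      rintro ⟨b, hbB, hbx⟩
      have hbn := hB b hbB
      have : b = n - x := by omega
      exact hb (this ▸ hbB)

lemma mem_g1 (n : ℕ) (S : Finset ℕ) (x : ℕ) :
    x ∈ (S.filter (fun s => n < s)).image (fun s => s - n) ↔ 1 ≤ x ∧ x + n ∈ S := by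
  simp only [mem_image, mem_filter]
  constructor
  · rintro ⟨s, ⟨hsS, hns⟩, rfl⟩
    refine ⟨by omega, ?_⟩
    have h : s - n + n = s := by omega
    rwa [h]
  · rintro ⟨hx, hxS⟩; exact ⟨x + n, ⟨hxS, by omega⟩, by omega⟩

lemma mem_g2 (n : ℕ) (S : Finset ℕ) (x : ℕ) :
    x ∈ (Finset.Icc 0 n \ S).image (fun b => n - b) ↔ x ≤ n ∧ n - x ∉ S := by
  simp only [mem_image, mem_sdiff, mem_Icc]
  constructor
  · rintro ⟨b, ⟨⟨-, hbn⟩, hbS⟩, rfl⟩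
    refine ⟨by omega, ?_⟩
    have h : n - (n - b) = b := by omega
    rwa [h]
  · rintro ⟨hxn, hxS⟩; exact ⟨n - x, ⟨⟨Nat.zero_le _, by omega⟩, hxS⟩, by omega⟩

lemma pair_sum_eq (m n k : ℕ) :
    ∑ P ∈ ((Finset.Icc 1 m).powerset ×ˢ (Finset.Icc 0 n).powerset).filter
        (fun P => P.1.card = P.2.card + k),
      (RatFunc.X : RatFunc ℚ) ^ (P.1.sum id + P.2.sum id + (n*(n+1)/2 + n*k)) =
    ∑ S ∈ (Finset.range (m+n+1)).powersetCard (n+k+1),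
      (RatFunc.X : RatFunc ℚ) ^ (S.sum id) := by
  apply Finset.sum_nbij'
    (i := fun P => P.1.image (· + n) ∪ (Finset.Icc 0 n \ P.2.image (fun b => n - b)))
    (j := fun S => ((S.filter (fun s => n < s)).image (fun s => s - n),
      (Finset.Icc 0 n \ S).image (fun b => n - b)))
  · -- hi : maps into target
    rintro ⟨A, B⟩ hP
    simp only [Finset.mem_filter, Finset.mem_product, Finset.mem_powerset] at hP
    obtain ⟨⟨hA, hB⟩, hcard⟩ := hP
    have hA1 : ∀ a ∈ A, 1 ≤ a := fun a ha => (Finset.mem_Icc.1 (hA ha)).1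
    have hAm : ∀ a ∈ A, a ≤ m := fun a ha => (Finset.mem_Icc.1 (hA ha)).2
    have hBn : ∀ b ∈ B, b ≤ n := fun b hb => (Finset.mem_Icc.1 (hB hb)).2
    rw [Finset.mem_powersetCard]
    constructor
    · intro x hx
      rw [mem_fmap n A B hA1 hBn] at hx
      rw [Finset.mem_range]
      rcases hx with ⟨h1, h2⟩ | ⟨h1, -⟩
      · have := hAm _ h2; omega
      · omega
    · -- cardinality
      have hdisj : Disjoint (A.image (· + n)) (Finset.Icc 0 n \ B.image (fun b => n - b)) := by
        rw [Finset.disjoint_left]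
        intro x hx hx'
        simp only [Finset.mem_image] at hx
        obtain ⟨a, ha, rfl⟩ := hx
        have := hA1 a ha
        have := (Finset.mem_Icc.1 (Finset.mem_sdiff.1 hx').1).2
        omega
      rw [Finset.card_union_of_disjoint hdisj,
        Finset.card_image_of_injective _ (add_left_injective n)]
      have hBsub : B.image (fun b => n - b) ⊆ Finset.Icc 0 n := by
        intro x hx
        simp only [Finset.mem_image] at hx
        obtain ⟨b, hb, rfl⟩ := hx
        simp only [Finset.mem_Icc]
        omega
      rw [Finset.card_sdiff_of_subset hBsub,
        Finset.card_image_of_injOn (fun b hb c hc h => by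
          have := hBn b hb; have := hBn c hc; omega), Nat.card_Icc]
      have hBle : B.card ≤ n + 1 := by
        calc B.card ≤ (Finset.Icc 0 n).card := Finset.card_le_card hB
          _ = n + 1 := by simp
      omega
  · -- hj : maps back
    intro S hS
    rw [Finset.mem_powersetCard] at hS
    obtain ⟨hSsub, hScard⟩ := hS
    have hSr : ∀ s ∈ S, s ≤ m + n := fun s hs => by
      have := Finset.mem_range.1 (hSsub hs); omega
    simp only [Finset.mem_filter, Finset.mem_product, Finset.mem_powerset]
    refine ⟨⟨?_, ?_⟩, ?_⟩
    · intro x hx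
      rw [mem_g1] at hx
      obtain ⟨h1, h2⟩ := hx
      have := hSr _ h2
      rw [Finset.mem_Icc]; omega
    · intro x hx
      rw [mem_g2] at hx
      rw [Finset.mem_Icc]; omega
    · -- card equality
      have h1 : ((S.filter (fun s => n < s)).image (fun s => s - n)).card
          = (S.filter (fun s => n < s)).card := by
        apply Finset.card_image_of_injOn
        intro a ha b hb h
        rw [Finset.mem_coe, Finset.mem_filter] at ha hb
        simp only [] at h
        omega
      have h2 : ((Finset.Icc 0 n \ S).image (fun b => n - b)).card
          = (Finset.Icc 0 n \ S).card := by
        apply Finset.card_image_of_injOn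
        intro a ha b hb h
        rw [Finset.mem_coe, Finset.mem_sdiff, Finset.mem_Icc] at ha hb
        simp only [] at h
        omega
      have h3 : (S.filter (fun s => n < s)).card + (S.filter (fun s => ¬ n < s)).card
          = S.card := Finset.card_filter_add_card_filter_not _
      have h4 : (Finset.Icc 0 n \ S).card + (Finset.Icc 0 n ∩ S).card
          = (Finset.Icc 0 n).card := Finset.card_sdiff_add_card_inter _ _
      have h5 : Finset.Icc 0 n ∩ S = S.filter (fun s => ¬ n < s) := by
        ext x
        simp only [Finset.mem_inter, Finset.mem_filter, Finset.mem_Icc]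
        constructor
        · rintro ⟨⟨-, h⟩, hx⟩; exact ⟨hx, by omega⟩
        · rintro ⟨hx, h⟩; exact ⟨⟨Nat.zero_le _, by omega⟩, hx⟩
      rw [Nat.card_Icc, h5] at h4
      rw [h1, h2]
      omega
  · -- left inverse
    rintro ⟨A, B⟩ hP
    simp only [Finset.mem_filter, Finset.mem_product, Finset.mem_powerset] at hP
    obtain ⟨⟨hA, hB⟩, -⟩ := hP
    have hA1 : ∀ a ∈ A, 1 ≤ a := fun a ha => (Finset.mem_Icc.1 (hA ha)).1
    have hBn : ∀ b ∈ B, b ≤ n := fun b hb => (Finset.mem_Icc.1 (hB hb)).2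
    have hmem := mem_fmap n A B hA1 hBn
    refine Prod.ext ?_ ?_
    · ext x
      rw [mem_g1]
      constructor
      · rintro ⟨h1, h2⟩
        rw [hmem] at h2
        rcases h2 with ⟨-, h⟩ | ⟨h, -⟩
        · rwa [Nat.add_sub_cancel] at h
        · omega
      · intro hx
        refine ⟨hA1 x hx, ?_⟩
        rw [hmem]
        exact Or.inl ⟨by have := hA1 x hx; omega, by rwa [Nat.add_sub_cancel]⟩
    · ext x
      rw [mem_g2]
      constructor
      · rintro ⟨h1, h2⟩
        rw [hmem] at h2
        push_neg at h2
        have h3 := h2.2 (by omega)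
        have h4 : n - (n - x) = x := by omega
        rw [h4] at h3
        exact h3
      · intro hx
        have hxn := hBn x hx
        refine ⟨hxn, ?_⟩
        rw [hmem]
        push_neg
        constructor
        · intro h5; exact absurd h5 (by omega)
        · intro _
          have h4 : n - (n - x) = x := by omega
          rw [h4]
          exact hx
  · -- right inverse
    intro S hS
    rw [Finset.mem_powersetCard] at hS
    obtain ⟨hSsub, -⟩ := hS
    have hA1 : ∀ a ∈ (S.filter (fun s => n < s)).image (fun s => s - n), 1 ≤ a := by
      intro a ha; exact ((mem_g1 n S a).1 ha).1
    have hBn : ∀ b ∈ (Finset.Icc 0 n \ S).image (fun b => n - b), b ≤ n := by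
      intro b hb; exact ((mem_g2 n S b).1 hb).1
    ext x
    rw [mem_fmap n _ _ hA1 hBn]
    constructor
    · rintro (⟨h1, h2⟩ | ⟨h1, h2⟩)
      · rw [mem_g1] at h2
        have h3 : x - n + n = x := by omega
        rw [h3] at h2
        exact h2.2
      · rw [mem_g2] at h2
        push_neg at h2
        have h3 := h2 (by omega)
        have h4 : n - (n - x) = x := by omega
        rw [h4] at h3
        exact h3
    · intro hx
      by_cases hxn : n < x
      · left
        refine ⟨hxn, ?_⟩
        rw [mem_g1]
        have h3 : x - n + n = x := by omega
        rw [h3]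
        exact ⟨by omega, hx⟩
      · right
        refine ⟨by omega, ?_⟩
        rw [mem_g2]
        push_neg
        intro _
        have h4 : n - (n - x) = x := by omega
        rw [h4]
        exact hx
  · -- values agree
    rintro ⟨A, B⟩ hP
    simp only [Finset.mem_filter, Finset.mem_product, Finset.mem_powerset] at hP
    obtain ⟨⟨hA, hB⟩, hcard⟩ := hP
    have hA1 : ∀ a ∈ A, 1 ≤ a := fun a ha => (Finset.mem_Icc.1 (hA ha)).1
    have hBn : ∀ b ∈ B, b ≤ n := fun b hb => (Finset.mem_Icc.1 (hB hb)).2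
    congr 1
    -- exponent equality
    have hdisj : Disjoint (A.image (· + n)) (Finset.Icc 0 n \ B.image (fun b => n - b)) := by
      rw [Finset.disjoint_left]
      intro x hx hx'
      simp only [Finset.mem_image] at hx
      obtain ⟨a, ha, rfl⟩ := hx
      have := hA1 a ha
      have := (Finset.mem_Icc.1 (Finset.mem_sdiff.1 hx').1).2
      omega
    have hBsub : B.image (fun b => n - b) ⊆ Finset.Icc 0 n := by
      intro x hx
      simp only [Finset.mem_image] at hx
      obtain ⟨b, hb, rfl⟩ := hx
      simp only [Finset.mem_Icc]
      omega
    have e0 : (Finset.Icc 0 n \ B.image (fun b => n - b)).sum id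
        + (B.image (fun b => n - b)).sum id = (Finset.Icc 0 n).sum id :=
      Finset.sum_sdiff hBsub
    have e1 : (A.image (· + n)).sum id = A.sum id + A.card * n := by
      rw [Finset.sum_image (fun a _ b _ h => by omega)]
      simp only [id]
      rw [Finset.sum_add_distrib, Finset.sum_const, smul_eq_mul]
    have e2 : (B.image (fun b => n - b)).sum id + B.sum id = B.card * n := by
      rw [Finset.sum_image (fun a ha b hb h => by
        have := hBn a ha; have := hBn b hb; omega)]
      simp only [id]
      rw [← Finset.sum_add_distrib]
      rw [Finset.sum_congr rfl (fun b hb => by have := hBn b hb; omega : 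
        ∀ b ∈ B, n - b + b = n)]
      rw [Finset.sum_const, smul_eq_mul]
    have e3 : (Finset.Icc 0 n).sum id * 2 = n * (n+1) := by
      have : Finset.Icc 0 n = Finset.range (n+1) := by
        ext x; simp only [Finset.mem_Icc, Finset.mem_range]; omega
      rw [this]
      have := Finset.sum_range_id_mul_two (n+1)
      simp only [Nat.add_sub_cancel] at this
      rw [show (Finset.range (n+1)).sum id = ∑ i ∈ Finset.range (n+1), i from rfl, this]
      ring
    have e4 : A.card * n = B.card * n + n * k := by rw [hcard]; ring
    obtain ⟨t, ht⟩ := Nat.even_mul_succ_self n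
    have e5 : (Finset.Icc 0 n).sum id = t := by omega
    have e6 : n*(n+1)/2 = t := by omega
    rw [Finset.sum_union hdisj, e1, e6]
    dsimp only
    rw [e5] at e0
    simp only [Function.id_def, id_eq] at e0 e2 ⊢
    omega


/-- The generating function for synchronized partitions in `𝒮_{m,n}` with nonnegative
discrepancy `k`: pairs `(α,β)` of strictly decreasing sequences, encoded as finsets
`A ⊆ [1,m]` and `B ⊆ [0,n]` (the part 0 is allowed in `β`), with
`card A = card B + k`, weighted by `q^{|A|+|B|}`. -/
theorem synchronized_nonneg_discrepancy_gf (m n k : ℕ) (hk : k ≤ m) :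
    ∑ P ∈ ((Finset.Icc 1 m).powerset ×ˢ (Finset.Icc 0 n).powerset).filter
        (fun P => P.1.card = P.2.card + k),
      (RatFunc.X : RatFunc ℚ) ^ (P.1.sum id + P.2.sum id) =
      (RatFunc.X : RatFunc ℚ) ^ (k * (k + 1) / 2) * qbinom (m + n + 1) ((n : ℤ) + k + 1) := by
  have hcast : ((n:ℤ) + k + 1) = ((n + k + 1 : ℕ) : ℤ) := by push_cast; ring
  rw [hcast]
  have hXne : (RatFunc.X : RatFunc ℚ) ≠ 0 := RatFunc.X_ne_zero
  apply mul_right_cancel₀ (pow_ne_zero (n*(n+1)/2 + n*k) hXne)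
  have lhs_eq : (∑ P ∈ ((Finset.Icc 1 m).powerset ×ˢ (Finset.Icc 0 n).powerset).filter
        (fun P => P.1.card = P.2.card + k),
      (RatFunc.X : RatFunc ℚ) ^ (P.1.sum id + P.2.sum id))
        * (RatFunc.X : RatFunc ℚ) ^ (n*(n+1)/2 + n*k)
      = ∑ P ∈ ((Finset.Icc 1 m).powerset ×ˢ (Finset.Icc 0 n).powerset).filter
        (fun P => P.1.card = P.2.card + k),
      (RatFunc.X : RatFunc ℚ) ^ (P.1.sum id + P.2.sum id + (n*(n+1)/2 + n*k)) := by
    rw [Finset.sum_mul]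
    exact Finset.sum_congr rfl fun P _ => by rw [← pow_add]
  rw [lhs_eq, pair_sum_eq m n k, gf_powersetCard (m+n+1) (n+k+1)]
  rw [mul_right_comm, ← pow_add]
  congr 2
  have hsub : (n+k+1) * ((n+k+1) - 1) = (n+k+1) * (n+k) := by simp
  rw [hsub]
  obtain ⟨t, ht⟩ := Nat.even_mul_succ_self n
  obtain ⟨u, hu⟩ := Nat.even_mul_succ_self k
  have hr : (n+k+1)*(n+k) = n*(n+1) + 2*(n*k) + k*(k+1) := by ring
  omega
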